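/- (One-step decrease of the kernel.) If at some time t the system satisfies v(t) < 4 and u(t) > 16·C²/(m·(4 − v(t))²), then v(t+1) < v(t). -/

import Mathlib

/-- **One-step decrease of the kernel.**  If at some time `t` the catapult
system satisfies `v t < 4` and `u t > 16·C²/(m·(4 − v t)²)`, then
`v (t+1) < v t`. -/
theorem nqm_catapult_one_step_kernel_decrease
    (C m : ℝ) (hC : 0 < C) (hm : 1 < m)
    (u v w : ℕ → ℝ)
    (hu : ∀ t, 0 ≤ u t)
    (hv : ∀ t, 0 ≤ v t)
    (hw : ∀ t, (w t) ^ 2 = C ^ 2 * u t / m)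
    (hue : ∀ t, u (t+1) = (1 - v t + u t + w t) ^ 2 * u t)
    (hve : ∀ t, v (t+1) = v t - u t * (4 - v t) - 4 * w t)
    (t : ℕ) (h4 : v t < 4)
    (hut : 16 * C ^ 2 / (m * (4 - v t) ^ 2) < u t) :
    v (t+1) < v t := by
  have hm0 : (0:ℝ) < m := lt_trans one_pos hm
  have ha : 0 < 4 - v t := by linarith
  have ha2 : 0 < m * (4 - v t) ^ 2 := by positivity
  have hupos : 0 < u t := lt_of_le_of_lt (by positivity) hut
  have key : 16 * C ^ 2 < u t * (m * (4 - v t) ^ 2) :=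
    (div_lt_iff₀ ha2).mp hut
  have hw2 : (w t) ^ 2 * m = C ^ 2 * u t := by
    rw [hw t]; field_simp
  rw [hve t]
  have h16 : (4 * w t) ^ 2 < (u t * (4 - v t)) ^ 2 := by
    have : 16 * C ^ 2 * u t < u t * (m * (4 - v t) ^ 2) * u t := by
      exact mul_lt_mul_of_pos_right key hupos
    nlinarith [hw2, mul_pos hupos hupos]
  nlinarith [h16, mul_pos hupos ha]
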